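/- Let P, Q, R, S be a pqrs-quad and let F : ℂ → ℂ be an entire function satisfying the special double confluent Heun equation ℋ[F] = 0, i.e. F″(w) + (ℓ + μ(e^{−w} − e^{w}))·F′(w) + (λ − (ℓ+1)μ·e^w)·F(w) = 0 for all w ∈ ℂ. Then the function L_A[F], defined by L_A[F](w) = e^{μ(e^w + e^{−w})}·(Q(iπ−w)·F(iπ−w) − e^{−w}·P(iπ−w)·F′(iπ−w)), also satisfies ℋ[L_A[F]] = 0 on all of ℂ. -/

import Mathlib

noncomputable def ipi : ℂ := (Real.pi : ℂ) * Complex.I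

noncomputable def heunOp (ell lam mu : ℂ) (F : ℂ → ℂ) : ℂ → ℂ := fun w =>
  deriv (deriv F) w + (ell + mu * (Complex.exp (-w) - Complex.exp w)) * deriv F w +
    (lam - (ell + 1) * mu * Complex.exp w) * F w

noncomputable def opLA (mu : ℂ) (P Q : ℂ → ℂ) (F : ℂ → ℂ) : ℂ → ℂ := fun w =>
  Complex.exp (mu * (Complex.exp w + Complex.exp (-w))) *
    (Q (ipi - w) * F (ipi - w) - Complex.exp (-w) * P (ipi - w) * deriv F (ipi - w))

private lemma exp_ipi_sub (w : ℂ) : Complex.exp (ipi - w) = -Complex.exp (-w) := by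
  rw [sub_eq_add_neg, Complex.exp_add, ipi, Complex.exp_pi_mul_I]; ring

private lemma exp_neg_ipi_sub (w : ℂ) : Complex.exp (-(ipi - w)) = -Complex.exp w := by
  have : -(ipi - w) = w + -ipi := by ring
  rw [this, Complex.exp_add, Complex.exp_neg, ipi, Complex.exp_pi_mul_I]
  ring

private lemma exp_two_ipi_sub (w : ℂ) :
    Complex.exp (2 * (ipi - w)) = Complex.exp (-w) * Complex.exp (-w) := by
  have : (2 : ℂ) * (ipi - w) = (ipi - w) + (ipi - w) := by ring
  rw [this, Complex.exp_add, exp_ipi_sub]; ring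

private lemma hasDerivAt_comp_sub {f : ℂ → ℂ} (hf : Differentiable ℂ f) (w : ℂ) :
    HasDerivAt (fun x => f (ipi - x)) (-deriv f (ipi - w)) w := by
  have h1 : HasDerivAt (fun x : ℂ => ipi - x) (-1) w := (hasDerivAt_id w).const_sub ipi
  have h2 := ((hf (ipi - w)).hasDerivAt).comp w h1
  simp at h2; exact h2

private lemma hasDerivAt_expneg (w : ℂ) :
    HasDerivAt (fun x : ℂ => Complex.exp (-x)) (-Complex.exp (-w)) w := by
  have := (Complex.hasDerivAt_exp (-w)).comp w (hasDerivAt_id w).neg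
  simp at this; exact this

private lemma hasDerivAt_E (mu w : ℂ) :
    HasDerivAt (fun x => Complex.exp (mu * (Complex.exp x + Complex.exp (-x))))
      (mu * (Complex.exp w - Complex.exp (-w)) *
        Complex.exp (mu * (Complex.exp w + Complex.exp (-w)))) w := by
  have h2 : HasDerivAt (fun x : ℂ => mu * (Complex.exp x + Complex.exp (-x)))
      (mu * (Complex.exp w - Complex.exp (-w))) w := by
    simpa [sub_eq_add_neg] using
      ((Complex.hasDerivAt_exp w).add (hasDerivAt_expneg w)).const_mul mu
  have := (Complex.hasDerivAt_exp _).comp w h2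
  refine this.congr_deriv ?_; ring

private lemma key (ell lam mu : ℂ) (F : ℂ → ℂ) (hF : Differentiable ℂ F)
    (hF' : Differentiable ℂ (deriv F)) (hHeun : ∀ w : ℂ, heunOp ell lam mu F w = 0)
    (α β α' β' : ℂ → ℂ) (hα : ∀ w, HasDerivAt α (α' w) w) (hβ : ∀ w, HasDerivAt β (β' w) w)
    (w : ℂ) :
    HasDerivAt (fun x => Complex.exp (mu * (Complex.exp x + Complex.exp (-x))) *
        (α x * F (ipi - x) + β x * deriv F (ipi - x)))
      (Complex.exp (mu * (Complex.exp w + Complex.exp (-w))) *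
        ((mu * (Complex.exp w - Complex.exp (-w)) * α w + α' w
            + (lam + (ell + 1) * mu * Complex.exp (-w)) * β w) * F (ipi - w)
          + (β' w + ell * β w - α w) * deriv F (ipi - w))) w := by
  have hFu := hasDerivAt_comp_sub hF w
  have hF'u := hasDerivAt_comp_sub hF' w
  have hE := hasDerivAt_E mu w
  have hraw := hE.mul (((hα w).mul hFu).add ((hβ w).mul hF'u))
  refine hraw.congr_deriv ?_
  simp only [Pi.mul_apply, Pi.add_apply]
  have hH := hHeun (ipi - w)
  simp only [heunOp] at hH
  have hFF : deriv (deriv F) (ipi - w) =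
      -(ell + mu * (Complex.exp (-(ipi - w)) - Complex.exp (ipi - w))) * deriv F (ipi - w)
        - (lam - (ell + 1) * mu * Complex.exp (ipi - w)) * F (ipi - w) := by
    linear_combination hH
  rw [hFF, exp_ipi_sub w, exp_neg_ipi_sub w]
  ring

set_option maxHeartbeats 1000000 in
theorem statement_8 (ell lam mu : ℂ) (P Q R S : ℂ → ℂ)
    (hP : Differentiable ℂ P) (hQ : Differentiable ℂ Q)
    (hR : Differentiable ℂ R) (hS : Differentiable ℂ S)
    (hsys1 : ∀ w : ℂ, Complex.exp w * deriv P w =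
      (mu + (ell - 1) * Complex.exp w) * P w - Q w + Complex.exp (2 * w) * R w)
    (hsys2 : ∀ w : ℂ, deriv Q w =
      Complex.exp w * ((lam - (ell + 1) * mu * Complex.exp w) * P w + mu * Q w + S w))
    (hsys3 : ∀ w : ℂ, Complex.exp w * deriv R w =
      -(lam + mu ^ 2) * P w + Complex.exp w * (2 * (ell - 1) - mu * Complex.exp w) * R w - S w)
    (hsys4 : ∀ w : ℂ, Complex.exp w * deriv S w =
      -(lam + mu ^ 2) * Q w + Complex.exp (2 * w) * (lam - (ell + 1) * mu * Complex.exp w) * R w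
        + ((ell - 1) * Complex.exp w - mu) * S w)
    (F : ℂ → ℂ) (hF : Differentiable ℂ F) (hF' : Differentiable ℂ (deriv F))
    (hHeun : ∀ w : ℂ, heunOp ell lam mu F w = 0) :
    ∀ w : ℂ, heunOp ell lam mu (opLA mu P Q F) w = 0 := by
  -- pointwise solved forms of the system at ipi - w
  have hab : ∀ w : ℂ, Complex.exp w * Complex.exp (-w) = 1 := by
    intro w; rw [← Complex.exp_add]; simp
  have hP'u : ∀ w : ℂ, deriv P (ipi - w) =
      -Complex.exp w * ((mu - (ell - 1) * Complex.exp (-w)) * P (ipi - w) - Q (ipi - w)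
        + Complex.exp (-w) * Complex.exp (-w) * R (ipi - w)) := by
    intro w
    have h1 := hsys1 (ipi - w)
    rw [exp_ipi_sub w, exp_two_ipi_sub w] at h1
    have := hab w
    linear_combination (-Complex.exp w) * h1 + (-deriv P (ipi - w)) * this
  have hQ'u : ∀ w : ℂ, deriv Q (ipi - w) =
      -Complex.exp (-w) * ((lam + (ell + 1) * mu * Complex.exp (-w)) * P (ipi - w)
        + mu * Q (ipi - w) + S (ipi - w)) := by
    intro w
    have h2 := hsys2 (ipi - w)
    rw [exp_ipi_sub w] at h2
    linear_combination h2
  have hR'u : ∀ w : ℂ, deriv R (ipi - w) =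
      Complex.exp w * (lam + mu ^ 2) * P (ipi - w)
        + (2 * (ell - 1) + mu * Complex.exp (-w)) * R (ipi - w)
        + Complex.exp w * S (ipi - w) := by
    intro w
    have h3 := hsys3 (ipi - w)
    rw [exp_ipi_sub w] at h3
    have := hab w
    linear_combination (-Complex.exp w) * h3 +
      (-deriv R (ipi - w) + (2 * (ell - 1) + mu * Complex.exp (-w)) * R (ipi - w)) * this
  have hS'u : ∀ w : ℂ, deriv S (ipi - w) =
      Complex.exp w * (lam + mu ^ 2) * Q (ipi - w)
        - Complex.exp (-w) * (lam + (ell + 1) * mu * Complex.exp (-w)) * R (ipi - w)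
        + ((ell - 1) + mu * Complex.exp w) * S (ipi - w) := by
    intro w
    have h4 := hsys4 (ipi - w)
    rw [exp_ipi_sub w, exp_two_ipi_sub w] at h4
    have := hab w
    linear_combination (-Complex.exp w) * h4 +
      (-deriv S (ipi - w)
        - Complex.exp (-w) * (lam + (ell + 1) * mu * Complex.exp (-w)) * R (ipi - w)
        + (ell - 1) * S (ipi - w)) * this
  -- rewrite opLA into the shape of `key`
  have hGshape : opLA mu P Q F = fun x =>
      Complex.exp (mu * (Complex.exp x + Complex.exp (-x))) *
        ((fun x => Q (ipi - x)) x * F (ipi - x)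
          + (fun x => -(Complex.exp (-x) * P (ipi - x))) x * deriv F (ipi - x)) := by
    funext x; simp only [opLA]; ring
  -- first derivative
  have hα1 : ∀ w : ℂ, HasDerivAt (fun x => Q (ipi - x)) ((fun w => -deriv Q (ipi - w)) w) w :=
    fun w => hasDerivAt_comp_sub hQ w
  have hβ1 : ∀ w : ℂ, HasDerivAt (fun x => -(Complex.exp (-x) * P (ipi - x)))
      ((fun w => Complex.exp (-w) * P (ipi - w) + Complex.exp (-w) * deriv P (ipi - w)) w) w := by
    intro w
    have := ((hasDerivAt_expneg w).mul (hasDerivAt_comp_sub hP w)).neg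
    refine this.congr_deriv ?_
    ring
  have hG1 : ∀ w : ℂ, HasDerivAt (opLA mu P Q F)
      (Complex.exp (mu * (Complex.exp w + Complex.exp (-w))) *
        ((mu * Complex.exp w * Q (ipi - w) + Complex.exp (-w) * S (ipi - w)) * F (ipi - w)
          + (-(mu * P (ipi - w)) - Complex.exp (-w) * Complex.exp (-w) * R (ipi - w)) *
            deriv F (ipi - w))) w := by
    intro w
    rw [hGshape]
    have hk := key ell lam mu F hF hF' hHeun _ _ _ _ hα1 hβ1 w
    convert hk using 1
    rw [hP'u w, hQ'u w]
    linear_combination (((-1 : ℂ) * Complex.exp (mu * (Complex.exp w + Complex.exp (-w))) * Q (ipi - w) * deriv F (ipi - w)) + (Complex.exp (mu * (Complex.exp w + Complex.exp (-w))) * mu * P (ipi - w) * deriv F (ipi - w)) + (Complex.exp (-w) * Complex.exp (mu * (Complex.exp w + Complex.exp (-w))) * P (ipi - w) * deriv F (ipi - w)) + ((-1 : ℂ) * Complex.exp (-w) * Complex.exp (mu * (Complex.exp w + Complex.exp (-w))) * ell * P (ipi - w) * deriv F (ipi - w)) + (Complex.exp (-w) * Complex.exp (-w) * Complex.exp (mu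 * (Complex.exp w + Complex.exp (-w))) * R (ipi - w) * deriv F (ipi - w))) * hab w
  have hderivG : deriv (opLA mu P Q F) = fun w =>
      Complex.exp (mu * (Complex.exp w + Complex.exp (-w))) *
        ((fun x => mu * Complex.exp x * Q (ipi - x) + Complex.exp (-x) * S (ipi - x)) w *
            F (ipi - w)
          + (fun x => -(mu * P (ipi - x)) - Complex.exp (-x) * Complex.exp (-x) * R (ipi - x)) w *
            deriv F (ipi - w)) :=
    funext fun w => (hG1 w).deriv
  -- second derivative
  have hα2 : ∀ w : ℂ, HasDerivAt
      (fun x => mu * Complex.exp x * Q (ipi - x) + Complex.exp (-x) * S (ipi - x))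
      ((fun w => (mu * Complex.exp w * Q (ipi - w) + mu * Complex.exp w * (-deriv Q (ipi - w)))
        + (-Complex.exp (-w) * S (ipi - w) + Complex.exp (-w) * (-deriv S (ipi - w)))) w) w := by
    intro w
    have h1 : HasDerivAt (fun x : ℂ => mu * Complex.exp x) (mu * Complex.exp w) w :=
      (Complex.hasDerivAt_exp w).const_mul mu
    exact (h1.mul (hasDerivAt_comp_sub hQ w)).add
      ((hasDerivAt_expneg w).mul (hasDerivAt_comp_sub hS w))
  have hβ2 : ∀ w : ℂ, HasDerivAt
      (fun x => -(mu * P (ipi - x)) - Complex.exp (-x) * Complex.exp (-x) * R (ipi - x))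
      ((fun w => mu * deriv P (ipi - w) + 2 * Complex.exp (-w) * Complex.exp (-w) * R (ipi - w)
        + Complex.exp (-w) * Complex.exp (-w) * deriv R (ipi - w)) w) w := by
    intro w
    have h1 : HasDerivAt (fun x : ℂ => -(mu * P (ipi - x))) (mu * deriv P (ipi - w)) w := by
      have := ((hasDerivAt_comp_sub hP w).const_mul mu).neg
      refine this.congr_deriv ?_; ring
    have h2 : HasDerivAt (fun x : ℂ => Complex.exp (-x) * Complex.exp (-x) * R (ipi - x))
        (-(2 * Complex.exp (-w) * Complex.exp (-w) * R (ipi - w))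
          - Complex.exp (-w) * Complex.exp (-w) * deriv R (ipi - w)) w := by
      have := ((hasDerivAt_expneg w).mul (hasDerivAt_expneg w)).mul (hasDerivAt_comp_sub hR w)
      refine this.congr_deriv ?_; simp only [Pi.mul_apply]; ring
    have := h1.sub h2
    refine this.congr_deriv ?_; ring
  intro w
  have hG2 := key ell lam mu F hF hF' hHeun _ _ _ _ hα2 hβ2 w
  have hdd : deriv (deriv (opLA mu P Q F)) w =
      Complex.exp (mu * (Complex.exp w + Complex.exp (-w))) *
        ((mu * (Complex.exp w - Complex.exp (-w)) *
            (mu * Complex.exp w * Q (ipi - w) + Complex.exp (-w) * S (ipi - w))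
          + ((mu * Complex.exp w * Q (ipi - w) + mu * Complex.exp w * (-deriv Q (ipi - w)))
            + (-Complex.exp (-w) * S (ipi - w) + Complex.exp (-w) * (-deriv S (ipi - w))))
          + (lam + (ell + 1) * mu * Complex.exp (-w)) *
            (-(mu * P (ipi - w)) - Complex.exp (-w) * Complex.exp (-w) * R (ipi - w))) *
              F (ipi - w)
        + ((mu * deriv P (ipi - w) + 2 * Complex.exp (-w) * Complex.exp (-w) * R (ipi - w)
            + Complex.exp (-w) * Complex.exp (-w) * deriv R (ipi - w))
          + ell * (-(mu * P (ipi - w)) - Complex.exp (-w) * Complex.exp (-w) * R (ipi - w))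
          - (mu * Complex.exp w * Q (ipi - w) + Complex.exp (-w) * S (ipi - w))) *
            deriv F (ipi - w)) := by
    rw [hderivG]
    exact hG2.deriv
  simp only [heunOp]
  rw [hdd, hderivG]
  simp only [opLA]
  rw [hP'u w, hQ'u w, hR'u w, hS'u w]
  linear_combination (((-1 : ℂ) * Complex.exp (mu * (Complex.exp w + Complex.exp (-w))) * lam * Q (ipi - w) * F (ipi - w)) + (Complex.exp (mu * (Complex.exp w + Complex.exp (-w))) * mu * lam * P (ipi - w) * F (ipi - w)) + ((2 : ℂ) * Complex.exp (mu * (Complex.exp w + Complex.exp (-w))) * mu * ell * P (ipi - w) * deriv F (ipi - w)) + (Complex.exp (-w) * Complex.exp (mu * (Complex.exp w + Complex.exp (-w))) * S (ipi - w) * deriv F (ipi - w)) + (Complex.exp (-w) * Complex.exp (mu * (Complex.exp w + Complex.exp (-w))) * lam * P (ipi - w) * deriv F (ipi - w)) + (Complex.exp (-w) * Complex.exp (mu * (Complex.exp w + Complex.exp (-w))) * mu * mu * P (ipi - w) * deriv F (ipi - w)) + (Complex.exp (-w) * Complex.exp (mu * (Complex.exp w + Complex.exp (-w))) * mu * mu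 * P (ipi - w) * F (ipi - w)) + (Complex.exp (-w) * Complex.exp (mu * (Complex.exp w + Complex.exp (-w))) * mu * mu * ell * P (ipi - w) * F (ipi - w))) * hab w
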